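/- Let r be a positive integer. The toric link group T_{2,2r} = ⟨a, b ∣ (ab)ʳ = (ba)ʳ⟩ is linear: there exist a field F, a natural number n, and an injective group homomorphism from T_{2,2r} into GL(n, F). -/

import Mathlib

/-- Relator of the toric link group `T_{2,2r} = ⟨a, b ∣ (ab)ʳ = (ba)ʳ⟩`,
with `a = 0`, `b = 1`. -/
def toric2Rels (r : ℕ) : Set (FreeGroup (Fin 2)) :=
  {(FreeGroup.of 0 * FreeGroup.of 1) ^ r * ((FreeGroup.of 1 * FreeGroup.of 0) ^ r)⁻¹}


noncomputable section ToricAux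

open RatFunc

set_option synthInstance.maxHeartbeats 1000000
set_option maxHeartbeats 1000000

abbrev KK : Type := RatFunc ℂ

namespace ToricAux

lemma intDegree_inv (f : KK) (hf : f ≠ 0) : (f⁻¹).intDegree = -f.intDegree := by
  have h := RatFunc.intDegree_mul hf (inv_ne_zero hf)
  rw [mul_inv_cancel₀ hf, RatFunc.intDegree_one] at h
  linarith

lemma intDegree_pow (f : KK) (hf : f ≠ 0) (n : ℕ) :
    (f ^ n).intDegree = n * f.intDegree := by
  induction n with
  | zero => simp
  | succ n ih =>
    rw [pow_succ, RatFunc.intDegree_mul (pow_ne_zero _ hf) hf, ih]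
    push_cast; ring

lemma intDegree_zpow (f : KK) (hf : f ≠ 0) (n : ℤ) :
    (f ^ n).intDegree = n * f.intDegree := by
  cases n with
  | ofNat m => rw [Int.ofNat_eq_coe, zpow_natCast, intDegree_pow f hf]
  | negSucc m =>
    rw [zpow_negSucc, intDegree_inv _ (pow_ne_zero _ hf), intDegree_pow f hf,
      Int.negSucc_eq]
    push_cast; ring

lemma add_ne_zero_of_intDegree_ne {x y : KK} (hx : x ≠ 0) (hy : y ≠ 0)
    (h : x.intDegree ≠ y.intDegree) : x + y ≠ 0 := by
  intro he
  have hyx : y = -x := by linear_combination he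
  rw [hyx, RatFunc.intDegree_neg] at h
  exact h rfl

lemma intDegree_add_eq_max {x y : KK} (hx : x ≠ 0) (hy : y ≠ 0)
    (h : x.intDegree ≠ y.intDegree) :
    (x + y).intDegree = max x.intDegree y.intDegree := by
  have hxy : x + y ≠ 0 := add_ne_zero_of_intDegree_ne hx hy h
  have le1 : (x + y).intDegree ≤ max x.intDegree y.intDegree :=
    RatFunc.intDegree_add_le hy hxy
  have hy2 : y.intDegree ≤ max (x + y).intDegree x.intDegree := by
    have e : (x + y) + (-x) = y := by ring
    have h2 := RatFunc.intDegree_add_le (x := x + y) (y := -x)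
      (neg_ne_zero.mpr hx) (by rw [e]; exact hy)
    rw [e, RatFunc.intDegree_neg] at h2
    exact h2
  have hx2 : x.intDegree ≤ max (x + y).intDegree y.intDegree := by
    have e : (x + y) + (-y) = x := by ring
    have h2 := RatFunc.intDegree_add_le (x := x + y) (y := -y)
      (neg_ne_zero.mpr hy) (by rw [e]; exact hx)
    rw [e, RatFunc.intDegree_neg] at h2
    exact h2
  rcases lt_or_gt_of_ne h with hlt | hlt
  · rw [max_eq_right hlt.le]
    rw [max_eq_right hlt.le] at le1
    rcases le_max_iff.mp hy2 with h' | h'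
    · exact le_antisymm le1 h'
    · omega
  · rw [max_eq_left hlt.le]
    rw [max_eq_left hlt.le] at le1
    rcases le_max_iff.mp hx2 with h' | h'
    · exact le_antisymm le1 h'
    · omega

/-! ### roots of unity -/

def zeta (r : ℕ) : ℂ := Complex.exp ((2 * Real.pi / r : ℝ) * Complex.I)

lemma zeta_pow (r k : ℕ) :
    zeta r ^ k = Complex.exp ((2 * Real.pi * k / r : ℝ) * Complex.I) := by
  rw [zeta, ← Complex.exp_nat_mul]
  congr 1
  push_cast
  ring

lemma abs_zeta_pow (r k : ℕ) : ‖zeta r ^ k‖ = 1 := by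
  rw [zeta_pow, Complex.norm_exp_ofReal_mul_I]

lemma zeta_pow_self (r : ℕ) (hr : 0 < r) : zeta r ^ r = 1 := by
  rw [zeta_pow]
  have hr' : (r : ℝ) ≠ 0 := Nat.cast_ne_zero.mpr hr.ne'
  have e : (2 * Real.pi * r / r : ℝ) = 2 * Real.pi := by field_simp
  rw [e]
  push_cast
  exact Complex.exp_two_pi_mul_I

lemma zeta_pow_ne_one (r k : ℕ) (h0 : 0 < k) (hk : k < r) : zeta r ^ k ≠ 1 := by
  intro hcon
  rw [zeta_pow] at hcon
  obtain ⟨n, hn⟩ := Complex.exp_eq_one_iff.mp hcon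
  have hr' : (0 : ℝ) < r := by exact_mod_cast h0.trans hk
  have h2 : (((2 * Real.pi * k / r : ℝ)) : ℂ) = (((n * (2 * Real.pi) : ℝ)) : ℂ) := by
    apply mul_right_cancel₀ Complex.I_ne_zero
    rw [hn]
    push_cast
    ring
  have h3 : (2 * Real.pi * k / r : ℝ) = n * (2 * Real.pi) := Complex.ofReal_inj.mp h2
  have hπ : (0:ℝ) < Real.pi := Real.pi_pos
  have hk' : (k : ℝ) = (n : ℝ) * r := by
    field_simp at h3
    nlinarith
  have hkz : (k : ℤ) = n * r := by exact_mod_cast hk'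
  have hrz : (0 : ℤ) < r := by exact_mod_cast hr'
  have h0z : (0 : ℤ) < k := by exact_mod_cast h0
  have hkzz : (k : ℤ) < r := by exact_mod_cast hk
  have hn1 : 1 ≤ n := by nlinarith
  nlinarith

/-! ### matrices -/

abbrev M2 : Type := Matrix (Fin 2) (Fin 2) KK
abbrev GL2 : Type := Matrix.GeneralLinearGroup (Fin 2) KK

def Rc : ℂ →+* KK := RatFunc.C

lemma Rc_ne_zero {c : ℂ} (hc : c ≠ 0) : Rc c ≠ 0 :=
  fun h => hc (Rc.injective (by simpa using h))

lemma intDegree_Rc_mul {c : ℂ} (hc : c ≠ 0) {f : KK} (hf : f ≠ 0) :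
    (Rc c * f).intDegree = f.intDegree := by
  rw [RatFunc.intDegree_mul (Rc_ne_zero hc) hf]
  simp [Rc]

def Com (z : ℂ) : M2 := !![Rc (2*z-1), Rc (2-2*z); Rc (z-1), Rc (2-z)]

lemma Com_mul (z w : ℂ) : Com z * Com w = Com (z * w) := by
  ext i j
  fin_cases i <;> fin_cases j <;>
  · simp only [Com, Matrix.mul_apply, Fin.sum_univ_two, Matrix.cons_val', Matrix.cons_val_zero,
      Matrix.cons_val_one, Matrix.head_cons, Matrix.head_fin_const, Matrix.empty_val',
      Matrix.cons_val_fin_one, Matrix.of_apply, Fin.zero_eta, Fin.mk_one]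
    rw [← map_mul, ← map_mul, ← map_add]
    congr 1
    ring

lemma Com_one : Com 1 = 1 := by
  have e1 : (2*(1:ℂ)-1) = 1 := by ring
  have e2 : (2-2*(1:ℂ)) = 0 := by ring
  have e3 : ((1:ℂ)-1) = 0 := by ring
  have e4 : (2-(1:ℂ)) = 1 := by ring
  rw [Com, e1, e2, e3, e4, map_one, map_zero, Matrix.one_fin_two]

lemma Com_pow (z : ℂ) (n : ℕ) : Com z ^ n = Com (z ^ n) := by
  induction n with
  | zero => simp [Com_one]
  | succ n ih => rw [pow_succ, pow_succ, ih, Com_mul]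

def Cunit (r : ℕ) (hr : 0 < r) : GL2 :=
  ⟨Com (zeta r), Com (zeta r ^ (r-1)),
    by
      rw [Com_mul, ← pow_succ', show r - 1 + 1 = r by omega, zeta_pow_self r hr, Com_one],
    by
      rw [Com_mul, ← pow_succ, show r - 1 + 1 = r by omega, zeta_pow_self r hr, Com_one]⟩

lemma Cunit_pow (r : ℕ) (hr : 0 < r) (n : ℕ) :
    ((Cunit r hr ^ n : GL2) : M2) = Com (zeta r ^ n) := by
  rw [Units.val_pow_eq_pow_val]
  show (Com (zeta r)) ^ n = _
  rw [Com_pow]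

lemma Cunit_pow_r (r : ℕ) (hr : 0 < r) : Cunit r hr ^ r = 1 := by
  apply Units.ext
  rw [Cunit_pow r hr, zeta_pow_self r hr, Com_one]
  rfl

def Dm (x : KK) : M2 := !![x, 0; 0, 1]

lemma Dm_mul (x y : KK) : Dm x * Dm y = Dm (x * y) := by
  ext i j
  fin_cases i <;> fin_cases j <;>
    simp [Dm, Matrix.mul_fin_two]

lemma Dm_one : Dm 1 = 1 := by
  rw [Dm, Matrix.one_fin_two]

def Dunit : KKˣ →* GL2 where
  toFun x := ⟨Dm x, Dm ((x⁻¹ : KKˣ) : KK),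
    by rw [Dm_mul, Units.mul_inv, Dm_one],
    by rw [Dm_mul, Units.inv_mul, Dm_one]⟩
  map_one' := Units.ext (by simp [Dm_one])
  map_mul' x y := Units.ext (by simp [Dm_mul])

/-! ### the action -/

set_option synthInstance.maxHeartbeats 1000000 in
instance : MulAction GL2 (Fin 2 → KK) where
  smul g w := (g : M2).mulVec w
  one_smul w := by
    show ((1 : GL2) : M2).mulVec w = w
    simp
  mul_smul g h w := by
    show ((g * h : GL2) : M2).mulVec w = (g : M2).mulVec ((h : M2).mulVec w)
    rw [Units.val_mul, ← Matrix.mulVec_mulVec]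

set_option synthInstance.maxHeartbeats 1000000 in
lemma smul_def (g : GL2) (w : Fin 2 → KK) : g • w = (g : M2).mulVec w := rfl

lemma mulVec2 (p q s t : KK) (w : Fin 2 → KK) :
    (!![p, q; s, t]).mulVec w = ![p * w 0 + q * w 1, s * w 0 + t * w 1] := by
  funext i
  fin_cases i <;> simp [Matrix.mulVec, dotProduct, Fin.sum_univ_two]

/-! ### ping pong sets -/

def XA : Set (Fin 2 → KK) :=
  {w | (w 0 ≠ 0 ∨ w 1 ≠ 0) ∧
    (w 0 = 0 ∨ w 1 = 0 ∨ (w 0).intDegree ≠ (w 1).intDegree)}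

def YC : Set (Fin 2 → KK) :=
  {w | w 0 ≠ 0 ∧ w 1 ≠ 0 ∧ (w 0).intDegree = (w 1).intDegree}

lemma XA_nonempty : XA.Nonempty :=
  ⟨![RatFunc.X, 1], Or.inl RatFunc.X_ne_zero, by
    right; right
    simp⟩

lemma YC_nonempty : YC.Nonempty :=
  ⟨![1, 1], by simp [YC]⟩

lemma disjoint_XA_YC : Disjoint XA YC := by
  rw [Set.disjoint_left]
  rintro w ⟨-, h2⟩ ⟨hy0, hy1, hy2⟩
  rcases h2 with h | h | h
  · exact hy0 h
  · exact hy1 h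
  · exact h hy2

/-! ### core ping pong moves -/

lemma Com_smul_mem {z : ℂ} (hz1 : ‖z‖ = 1) (hz2 : z ≠ 1) {w : Fin 2 → KK}
    (hw : w ∈ XA) : (Com z).mulVec w ∈ YC := by
  have e1 : (2*z-1) ≠ 0 := by
    intro h
    have hz : z = 1/2 := by linear_combination h/2
    rw [hz, norm_div, norm_one, Complex.norm_two] at hz1
    norm_num at hz1
  have e2 : (2-2*z) ≠ 0 := by
    intro h
    exact hz2 (by linear_combination -h/2)
  have e3 : (z-1) ≠ 0 := sub_ne_zero_of_ne hz2
  have e4 : (2-z) ≠ 0 := by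
    intro h
    have hz : z = 2 := by linear_combination -h
    rw [hz, Complex.norm_two] at hz1
    norm_num at hz1
  have hc : (Com z).mulVec w =
      ![Rc (2*z-1) * w 0 + Rc (2-2*z) * w 1, Rc (z-1) * w 0 + Rc (2-z) * w 1] := by
    rw [Com, mulVec2]
  rw [hc]
  show Rc (2*z-1) * w 0 + Rc (2-2*z) * w 1 ≠ 0 ∧
    Rc (z-1) * w 0 + Rc (2-z) * w 1 ≠ 0 ∧
    (Rc (2*z-1) * w 0 + Rc (2-2*z) * w 1).intDegree =
      (Rc (z-1) * w 0 + Rc (2-z) * w 1).intDegree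
  by_cases h0 : w 0 = 0
  · have h1 : w 1 ≠ 0 := by
      rcases hw.1 with h | h
      · exact absurd h0 h
      · exact h
    have E0 : Rc (2*z-1) * w 0 + Rc (2-2*z) * w 1 = Rc (2-2*z) * w 1 := by
      rw [h0, mul_zero, zero_add]
    have E1 : Rc (z-1) * w 0 + Rc (2-z) * w 1 = Rc (2-z) * w 1 := by
      rw [h0, mul_zero, zero_add]
    rw [E0, E1]
    exact ⟨mul_ne_zero (Rc_ne_zero e2) h1, mul_ne_zero (Rc_ne_zero e4) h1,
      by rw [intDegree_Rc_mul e2 h1, intDegree_Rc_mul e4 h1]⟩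
  · by_cases h1 : w 1 = 0
    · have E0 : Rc (2*z-1) * w 0 + Rc (2-2*z) * w 1 = Rc (2*z-1) * w 0 := by
        rw [h1, mul_zero, add_zero]
      have E1 : Rc (z-1) * w 0 + Rc (2-z) * w 1 = Rc (z-1) * w 0 := by
        rw [h1, mul_zero, add_zero]
      rw [E0, E1]
      exact ⟨mul_ne_zero (Rc_ne_zero e1) h0, mul_ne_zero (Rc_ne_zero e3) h0,
        by rw [intDegree_Rc_mul e1 h0, intDegree_Rc_mul e3 h0]⟩
    · have hd : (w 0).intDegree ≠ (w 1).intDegree := by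
        rcases hw.2 with h | h | h
        · exact absurd h h0
        · exact absurd h h1
        · exact h
      have m1 : Rc (2*z-1) * w 0 ≠ 0 := mul_ne_zero (Rc_ne_zero e1) h0
      have m2 : Rc (2-2*z) * w 1 ≠ 0 := mul_ne_zero (Rc_ne_zero e2) h1
      have m3 : Rc (z-1) * w 0 ≠ 0 := mul_ne_zero (Rc_ne_zero e3) h0
      have m4 : Rc (2-z) * w 1 ≠ 0 := mul_ne_zero (Rc_ne_zero e4) h1
      have d1 : (Rc (2*z-1) * w 0).intDegree = (w 0).intDegree := intDegree_Rc_mul e1 h0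
      have d2 : (Rc (2-2*z) * w 1).intDegree = (w 1).intDegree := intDegree_Rc_mul e2 h1
      have d3 : (Rc (z-1) * w 0).intDegree = (w 0).intDegree := intDegree_Rc_mul e3 h0
      have d4 : (Rc (2-z) * w 1).intDegree = (w 1).intDegree := intDegree_Rc_mul e4 h1
      have hd12 : (Rc (2*z-1) * w 0).intDegree ≠ (Rc (2-2*z) * w 1).intDegree := by
        rw [d1, d2]; exact hd
      have hd34 : (Rc (z-1) * w 0).intDegree ≠ (Rc (2-z) * w 1).intDegree := by
        rw [d3, d4]; exact hd
      refine ⟨add_ne_zero_of_intDegree_ne m1 m2 hd12,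
        add_ne_zero_of_intDegree_ne m3 m4 hd34, ?_⟩
      rw [intDegree_add_eq_max m1 m2 hd12, intDegree_add_eq_max m3 m4 hd34,
        d1, d2, d3, d4]

lemma Dm_smul_mem {x : KK} (hx0 : x ≠ 0) (hd : x.intDegree ≠ 0) {w : Fin 2 → KK}
    (hw : w ∈ YC) : (Dm x).mulVec w ∈ XA := by
  have hc : (Dm x).mulVec w = ![x * w 0 + 0 * w 1, 0 * w 0 + 1 * w 1] := by
    rw [Dm, mulVec2]
  have hc' : (Dm x).mulVec w = ![x * w 0, w 1] := by
    rw [hc]; congr 1 <;> ring_nf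
  rw [hc']
  constructor
  · show x * w 0 ≠ 0 ∨ _
    exact Or.inl (mul_ne_zero hx0 hw.1)
  · show _ ∨ _ ∨ (x * w 0).intDegree ≠ (w 1).intDegree
    right; right
    rw [RatFunc.intDegree_mul hx0 hw.1, ← hw.2.2]
    intro h
    apply hd
    linarith [h]

/-! ### homs into GL2 -/

def zmodHom {M : Type*} [Monoid M] (r : ℕ) [NeZero r] (m : M) (hm : m ^ r = 1) :
    Multiplicative (ZMod r) →* M where
  toFun k := m ^ (Multiplicative.toAdd k).val
  map_one' := by
    show m ^ (Multiplicative.toAdd (1 : Multiplicative (ZMod r))).val = 1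
    rw [toAdd_one, ZMod.val_zero, pow_zero]
  map_mul' a b := by
    show m ^ ((Multiplicative.toAdd (a * b)).val) = _
    rw [toAdd_mul, ZMod.val_add, ← pow_eq_pow_mod _ hm, pow_add]

lemma zmodHom_apply {M : Type*} [Monoid M] (r : ℕ) [NeZero r] (m : M) (hm : m ^ r = 1)
    (k : ZMod r) : zmodHom r m hm (Multiplicative.ofAdd k) = m ^ k.val := rfl

lemma zmodHom_ofAdd_one {M : Type*} [Monoid M] (r : ℕ) [NeZero r] (m : M) (hm : m ^ r = 1) :
    zmodHom r m hm (Multiplicative.ofAdd 1) = m := by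
  rcases eq_or_lt_of_le (Nat.one_le_iff_ne_zero.mpr (NeZero.ne r)) with h1 | h1
  · subst h1
    rw [zmodHom_apply]
    have hv : ((1 : ZMod 1)).val = 0 := rfl
    rw [hv, pow_zero, pow_one] at *
    exact hm.symm
  · haveI : Fact (1 < r) := ⟨h1⟩
    rw [zmodHom_apply, ZMod.val_one, pow_one]

def Xu : KKˣ := Units.mk0 (RatFunc.X : KK) RatFunc.X_ne_zero

def aHom : Multiplicative ℤ →* GL2 := Dunit.comp (zpowersHom KKˣ Xu)

def Hfam (r : ℕ) : Bool → Type := fun b => Bool.rec (Multiplicative (ZMod r)) (Multiplicative ℤ) b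

instance (r : ℕ) (b : Bool) : Group (Hfam r b) := by
  cases b
  · exact inferInstanceAs (Group (Multiplicative (ZMod r)))
  · exact inferInstanceAs (Group (Multiplicative ℤ))

def pfam (r : ℕ) (hr : 0 < r) [NeZero r] : ∀ b, Hfam r b →* GL2 := fun b =>
  Bool.rec (motive := fun b => Hfam r b →* GL2)
    (zmodHom r (Cunit r hr) (Cunit_pow_r r hr)) aHom b

def Xsets : Bool → Set (Fin 2 → KK) := fun b => Bool.rec YC XA b

theorem pfam_lift_injective (r : ℕ) (hr : 0 < r) [NeZero r] :
    Function.Injective (Monoid.CoprodI.lift (pfam r hr)) := by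
  apply Monoid.CoprodI.lift_injective_of_ping_pong (pfam r hr) ?hcard Xsets ?hne ?hdisj ?hpp
  case hcard =>
    right
    refine ⟨true, ?_⟩
    have : Cardinal.mk (Hfam r true) = Cardinal.mk ℤ :=
      Cardinal.mk_congr (Multiplicative.toAdd)
    rw [this, Cardinal.mk_int]
    exact le_of_lt (by exact_mod_cast Cardinal.nat_lt_aleph0 3)
  case hne =>
    intro b
    cases b
    · exact YC_nonempty
    · exact XA_nonempty
  case hdisj =>
    intro i j hij
    cases i <;> cases j
    · exact absurd rfl hij
    · exact disjoint_XA_YC.symm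
    · exact disjoint_XA_YC
    · exact absurd rfl hij
  case hpp =>
    intro i j hij
    cases i <;> cases j
    · exact absurd rfl hij
    · -- i = false (ZMod r side), j = true
      intro h hne1 v hv
      rw [Set.mem_smul_set] at hv
      obtain ⟨w, hw, rfl⟩ := hv
      have hk : (Multiplicative.toAdd (show Multiplicative (ZMod r) from h)) ≠ 0 := by
        intro hc
        apply hne1
        show h = 1
        have : (show Multiplicative (ZMod r) from h) = Multiplicative.ofAdd 0 := by
          rw [← hc]; rfl
        simp only [ofAdd_zero] at this
        exact this
      have hval : 0 < (Multiplicative.toAdd (show Multiplicative (ZMod r) from h)).val := by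
        apply Nat.pos_of_ne_zero
        intro hc
        exact hk ((ZMod.val_eq_zero _).mp hc)
      show (pfam r hr false h) • w ∈ YC
      rw [smul_def]
      have hCform : ((pfam r hr false h : GL2) : M2)
          = Com (zeta r ^ (Multiplicative.toAdd (show Multiplicative (ZMod r) from h)).val) := by
        show ((Cunit r hr ^ (Multiplicative.toAdd (show Multiplicative (ZMod r) from h)).val
          : GL2) : M2) = _
        exact Cunit_pow r hr _
      rw [hCform]
      exact Com_smul_mem (abs_zeta_pow r _)
        (zeta_pow_ne_one r _ hval (ZMod.val_lt _)) hw
    · -- i = true (ℤ side), j = false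
      intro h hne1 v hv
      rw [Set.mem_smul_set] at hv
      obtain ⟨w, hw, rfl⟩ := hv
      have hk : (Multiplicative.toAdd (show Multiplicative ℤ from h)) ≠ 0 := by
        intro hc
        apply hne1
        show h = 1
        have : (show Multiplicative ℤ from h) = Multiplicative.ofAdd 0 := by
          rw [← hc]; rfl
        simp only [ofAdd_zero] at this
        exact this
      show (pfam r hr true h) • w ∈ XA
      rw [smul_def]
      have hform : ((pfam r hr true h : GL2) : M2)
          = Dm ((Xu ^ (Multiplicative.toAdd (show Multiplicative ℤ from h)) : KKˣ) : KK) := by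
        rfl
      rw [hform]
      apply Dm_smul_mem (Units.ne_zero _) ?_ hw
      rw [Units.val_zpow_eq_zpow_val]
      show ((RatFunc.X : KK) ^ (Multiplicative.toAdd (show Multiplicative ℤ from h))).intDegree ≠ 0
      rw [intDegree_zpow _ RatFunc.X_ne_zero, RatFunc.intDegree_X]
      simpa using hk
    · exact absurd rfl hij


/-! ### the presented group -/

variable (r : ℕ)

def ga : PresentedGroup (toric2Rels r) := PresentedGroup.of 0
def gb : PresentedGroup (toric2Rels r) := PresentedGroup.of 1

lemma grel : (ga r * gb r) ^ r = (gb r * ga r) ^ r := by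
  have hmem : ((FreeGroup.of (0 : Fin 2) * FreeGroup.of 1) ^ r *
      ((FreeGroup.of 1 * FreeGroup.of 0) ^ r)⁻¹) ∈ Subgroup.normalClosure (toric2Rels r) :=
    Subgroup.subset_normalClosure (Set.mem_singleton _)
  have h1 : PresentedGroup.mk (toric2Rels r)
      ((FreeGroup.of 0 * FreeGroup.of 1) ^ r * ((FreeGroup.of 1 * FreeGroup.of 0) ^ r)⁻¹) = 1 :=
    (QuotientGroup.eq_one_iff _).mpr hmem
  rw [map_mul, map_inv, map_pow, map_pow, map_mul, map_mul, mul_inv_eq_one] at h1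
  exact h1

def zc : PresentedGroup (toric2Rels r) := (ga r * gb r) ^ r

lemma zc_comm_a : Commute (ga r) (zc r) := by
  have h : SemiconjBy (ga r) (gb r * ga r) (ga r * gb r) := (mul_assoc _ _ _).symm
  have h2 := h.pow_right r
  show ga r * zc r = zc r * ga r
  rw [zc]
  conv_lhs => rw [grel r]
  exact h2

lemma zc_comm_b : Commute (gb r) (zc r) := by
  have h : SemiconjBy (gb r) (ga r * gb r) (gb r * ga r) := (mul_assoc _ _ _).symm
  have h2 := h.pow_right r
  show gb r * zc r = zc r * gb r
  rw [zc]
  conv_rhs => rw [grel r]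
  exact h2

lemma zc_central (g : PresentedGroup (toric2Rels r)) : Commute g (zc r) := by
  have hg : g ∈ Subgroup.centralizer {zc r} := by
    apply PresentedGroup.generated_by
    intro j
    rw [Subgroup.mem_centralizer_iff]
    rintro y hy
    rw [Set.mem_singleton_iff] at hy
    subst hy
    fin_cases j
    · exact (zc_comm_a r).symm.eq
    · exact (zc_comm_b r).symm.eq
  have := Subgroup.mem_centralizer_iff.mp hg (zc r) rfl
  exact this.symm

instance zc_normal : (Subgroup.zpowers (zc r)).Normal := by
  constructor
  intro n hn g
  obtain ⟨k, hk⟩ := Subgroup.mem_zpowers_iff.mp hn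
  have hc : Commute g n := by
    rw [← hk]
    exact (zc_central r g).zpow_right k
  rw [hc.eq, mul_inv_cancel_right]
  exact hn

/-! ### hom to the free product -/

def ofT : Multiplicative ℤ →* Monoid.CoprodI (Hfam r) := Monoid.CoprodI.of (M := Hfam r) (i := true)

def ofF : Multiplicative (ZMod r) →* Monoid.CoprodI (Hfam r) := Monoid.CoprodI.of (M := Hfam r) (i := false)

lemma lift_ofT {N : Type} [Monoid N] (f : ∀ b, Hfam r b →* N) (x : Multiplicative ℤ) :
    Monoid.CoprodI.lift f (ofT r x) = f true x := Monoid.CoprodI.lift_of (M := Hfam r) (i := true) f x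

lemma lift_ofF {N : Type} [Monoid N] (f : ∀ b, Hfam r b →* N) (x : Multiplicative (ZMod r)) :
    Monoid.CoprodI.lift f (ofF r x) = f false x := Monoid.CoprodI.lift_of (M := Hfam r) (i := false) f x

def Xg : Monoid.CoprodI (Hfam r) := ofT r (Multiplicative.ofAdd (1 : ℤ))

def Yg : Monoid.CoprodI (Hfam r) := ofF r (Multiplicative.ofAdd (1 : ZMod r))

lemma Yg_pow : Yg r ^ r = 1 := by
  rw [Yg, ← map_pow]
  have h : (Multiplicative.ofAdd (1 : ZMod r)) ^ r = (1 : Multiplicative (ZMod r)) := by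
    rw [← ofAdd_nsmul, nsmul_eq_mul, mul_one, ZMod.natCast_self, ofAdd_zero]
  rw [h, map_one]

lemma q_rels : ∀ w ∈ toric2Rels r,
    FreeGroup.lift ![Xg r, (Xg r)⁻¹ * Yg r] w = 1 := by
  intro w hw
  rw [toric2Rels, Set.mem_singleton_iff] at hw
  subst hw
  simp only [map_mul, map_pow, map_inv, FreeGroup.lift_apply_of, Matrix.cons_val_zero,
    Matrix.cons_val_one, Matrix.head_cons]
  have h1 : Xg r * ((Xg r)⁻¹ * Yg r) = Yg r := by group
  have h2 : (((Xg r)⁻¹ * Yg r) * Xg r) ^ r = (Xg r)⁻¹ * (Yg r) ^ r * Xg r := by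
    conv_lhs => rw [show ((Xg r)⁻¹ * Yg r) * Xg r = (Xg r)⁻¹ * Yg r * ((Xg r)⁻¹)⁻¹ by
      rw [inv_inv]]
    exact conj_pow
  rw [h1, h2, Yg_pow]
  simp

def qHom : PresentedGroup (toric2Rels r) →* Monoid.CoprodI (Hfam r) :=
  PresentedGroup.toGroup (q_rels r)

/-! ### section over G ⧸ zpowers z -/

def piZ : PresentedGroup (toric2Rels r) →* PresentedGroup (toric2Rels r) ⧸ Subgroup.zpowers (zc r) :=
  QuotientGroup.mk' (Subgroup.zpowers (zc r))

variable [NeZero r]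

lemma piZ_pow_r : (piZ r (ga r * gb r)) ^ r = 1 := by
  rw [← map_pow]
  exact (QuotientGroup.eq_one_iff _).mpr (Subgroup.mem_zpowers _)

def sfam : ∀ b, Hfam r b →* (PresentedGroup (toric2Rels r) ⧸ Subgroup.zpowers (zc r)) :=
  fun b => Bool.rec (motive := fun b => Hfam r b →* _)
    (zmodHom r (piZ r (ga r * gb r)) (piZ_pow_r r)) (zpowersHom _ (piZ r (ga r))) b

lemma s_q : (Monoid.CoprodI.lift (sfam r)).comp (qHom r) = piZ r := by
  apply PresentedGroup.ext
  intro i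
  fin_cases i
  · show (Monoid.CoprodI.lift (sfam r)) (qHom r (PresentedGroup.of 0)) = piZ r (ga r)
    rw [qHom, PresentedGroup.toGroup.of]
    show (Monoid.CoprodI.lift (sfam r)) (Xg r) = piZ r (ga r)
    rw [Xg, lift_ofT]
    show zpowersHom _ (piZ r (ga r)) (Multiplicative.ofAdd (1 : ℤ)) = piZ r (ga r)
    simp [zpowersHom_apply]
  · show (Monoid.CoprodI.lift (sfam r)) (qHom r (PresentedGroup.of 1)) = piZ r (gb r)
    rw [qHom, PresentedGroup.toGroup.of]
    show (Monoid.CoprodI.lift (sfam r)) ((Xg r)⁻¹ * Yg r) = piZ r (gb r)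
    rw [map_mul, map_inv, Xg, Yg, lift_ofT, lift_ofF]
    show ((zpowersHom _ (piZ r (ga r))) (Multiplicative.ofAdd (1 : ℤ)))⁻¹ *
      (zmodHom r (piZ r (ga r * gb r)) (piZ_pow_r r)) (Multiplicative.ofAdd (1 : ZMod r))
        = piZ r (gb r)
    rw [zmodHom_ofAdd_one, zpowersHom_apply, toAdd_ofAdd, zpow_one, ← map_inv, ← map_mul,
      inv_mul_cancel_left]

lemma q_ker (g : PresentedGroup (toric2Rels r)) (hg : qHom r g = 1) :
    g ∈ Subgroup.zpowers (zc r) := by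
  have h2 : (Monoid.CoprodI.lift (sfam r)) (qHom r g) = 1 := by rw [hg, map_one]
  rw [← MonoidHom.comp_apply, s_q] at h2
  exact (QuotientGroup.eq_one_iff _).mp h2

/-! ### determinant-like character -/

lemma chi_rels : ∀ w ∈ toric2Rels r,
    FreeGroup.lift (fun _ : Fin 2 => Xu) w = 1 := by
  intro w hw
  rw [toric2Rels, Set.mem_singleton_iff] at hw
  subst hw
  simp

def chiHom : PresentedGroup (toric2Rels r) →* KKˣ := PresentedGroup.toGroup (chi_rels r)

lemma chi_zc : chiHom r (zc r) = (Xu * Xu) ^ r := by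
  rw [zc, map_pow, map_mul, ga, gb, chiHom, PresentedGroup.toGroup.of,
    PresentedGroup.toGroup.of]

/-! ### block embedding -/

def E3 (M : M2) (u : KK) : Matrix (Fin 3) (Fin 3) KK :=
  !![M 0 0, M 0 1, 0; M 1 0, M 1 1, 0; 0, 0, u]

lemma E3_mul (M N : M2) (u v : KK) : E3 M u * E3 N v = E3 (M * N) (u * v) := by
  ext i j
  fin_cases i <;> fin_cases j <;>
    simp [E3, Matrix.mul_apply, Fin.sum_univ_three, Fin.sum_univ_two,
      Matrix.vecHead, Matrix.vecTail]

lemma E3_one : E3 1 1 = 1 := by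
  ext i j
  fin_cases i <;> fin_cases j <;>
    simp [E3, Matrix.one_apply, Matrix.vecHead, Matrix.vecTail]

def blockHom : GL2 × KKˣ →* Matrix.GeneralLinearGroup (Fin 3) KK where
  toFun p := ⟨E3 (p.1 : M2) (p.2 : KK), E3 ((p.1⁻¹ : GL2) : M2) ((p.2⁻¹ : KKˣ) : KK),
    by rw [E3_mul, Units.mul_inv, Units.mul_inv, E3_one],
    by rw [E3_mul, Units.inv_mul, Units.inv_mul, E3_one]⟩
  map_one' := by
    apply Units.ext
    show E3 ((1 : GL2) : M2) ((1 : KKˣ) : KK) = 1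
    rw [Units.val_one, Units.val_one, E3_one]
  map_mul' p q := by
    apply Units.ext
    show E3 ((p.1 * q.1 : GL2) : M2) ((p.2 * q.2 : KKˣ) : KK) = _
    rw [Units.val_mul, Units.val_mul, ← E3_mul]
    rfl

lemma blockHom_eq_one {g : GL2} {u : KKˣ} (h : blockHom (g, u) = 1) : g = 1 ∧ u = 1 := by
  have hv : E3 (g : M2) (u : KK) = 1 := congrArg Units.val h
  constructor
  · apply Units.ext
    ext i j
    fin_cases i <;> fin_cases j
    · have := congrFun (congrFun hv 0) 0; simpa [E3, Matrix.one_apply] using this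
    · have := congrFun (congrFun hv 0) 1; simpa [E3, Matrix.one_apply] using this
    · have := congrFun (congrFun hv 1) 0; simpa [E3, Matrix.one_apply] using this
    · have := congrFun (congrFun hv 1) 1; simpa [E3, Matrix.one_apply] using this
  · apply Units.ext
    have := congrFun (congrFun hv 2) 2; simpa [E3, Matrix.one_apply] using this

end ToricAux

end ToricAux

open ToricAux in
/-- The toric link group `T_{2,2r} = ⟨a, b ∣ (ab)ʳ = (ba)ʳ⟩` is linear. -/
theorem stmt_15 (r : ℕ) (hr : 0 < r) :
    ∃ (F : Type) (_ : Field F) (n : ℕ)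
      (φ : PresentedGroup (toric2Rels r) →* Matrix.GeneralLinearGroup (Fin n) F),
      Function.Injective φ := by
  haveI : NeZero r := ⟨hr.ne'⟩
  refine ⟨KK, inferInstance, 3,
    (blockHom).comp (((Monoid.CoprodI.lift (pfam r hr)).comp (qHom r)).prod (chiHom r)), ?_⟩
  rw [injective_iff_map_eq_one]
  intro g hg
  have hpair : blockHom ((Monoid.CoprodI.lift (pfam r hr)) (qHom r g), chiHom r g) = 1 := hg
  obtain ⟨hρ, hχ⟩ := blockHom_eq_one hpair
  have hq : qHom r g = 1 := by
    apply pfam_lift_injective r hr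
    rw [hρ, map_one]
  obtain ⟨k, hk⟩ := Subgroup.mem_zpowers_iff.mp (q_ker r g hq)
  have hχk : ((Xu * Xu) ^ r) ^ k = 1 := by
    rw [← chi_zc, ← map_zpow, hk, hχ]
  have hXu : (Xu : KK) = RatFunc.X := rfl
  have hXX : ((Xu : KK) * (Xu : KK)) ≠ 0 := mul_ne_zero (Units.ne_zero Xu) (Units.ne_zero Xu)
  have hval : ((((Xu * Xu) ^ r) ^ k : KKˣ) : KK) = 1 := by rw [hχk, Units.val_one]
  rw [Units.val_zpow_eq_zpow_val, Units.val_pow_eq_pow_val, Units.val_mul] at hval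
  have hd := congrArg RatFunc.intDegree hval
  rw [intDegree_zpow _ (pow_ne_zero _ hXX), intDegree_pow _ hXX,
    RatFunc.intDegree_one] at hd
  rw [hXu, RatFunc.intDegree_mul RatFunc.X_ne_zero RatFunc.X_ne_zero,
    RatFunc.intDegree_X] at hd
  have hk0 : k = 0 := by
    rcases mul_eq_zero.mp hd with h | h
    · exact h
    · exfalso
      have : (r : ℤ) ≠ 0 := by exact_mod_cast hr.ne'
      omega
  rw [← hk, hk0, zpow_zero]
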